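/- Let r > 0 and define f(α, β) = sup over ℓ ≥ 0 of g(ℓ, α, β), for α, β ∈ [0, π/2) (this supremum is finite and attained). Then for all α, β ∈ [0, π/2) one has f(α, β) ≤ (f(α, α) + f(β, β))/2, and equality holds if and only if α = β. -/

import Mathlib

open Real

/-- The inverse hyperbolic tangent. -/
noncomputable def artanh (x : ℝ) : ℝ := Real.log ((1 + x) / (1 - x)) / 2

/-- The candle function of hyperbolic `4`-space: `s(ℓ) = sinh³ ℓ`. -/
noncomputable def hypCandle (ℓ : ℝ) : ℝ := (sinh ℓ) ^ 3

/-- The primitive of `hypCandle` vanishing at `0`. -/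
noncomputable def hypCandleI (ℓ : ℝ) : ℝ :=
  2 / 3 + (1 / 3) * (sinh ℓ) ^ 2 * cosh ℓ - (2 / 3) * cosh ℓ

/-- The primitive of `hypCandleI` vanishing at `0`. -/
noncomputable def hypCandleII (ℓ : ℝ) : ℝ :=
  (2 / 3) * ℓ + (1 / 9) * (sinh ℓ) ^ 3 - (2 / 3) * sinh ℓ

/-- The dual test function for the `κ = -1`, `n = 4` isoperimetric problem. -/
noncomputable def hypG (r ℓ α β : ℝ) : ℝ :=
  (4 / 3) * ℓ - hypCandle ℓ / (9 * (tanh r) ^ 2 * cos α * cos β)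
    + (hypCandleI ℓ / (3 * tanh r)) * (1 / cos α + 1 / cos β) - hypCandleII ℓ

/-- `f(α, β) = sup_{ℓ ≥ 0} g(ℓ, α, β)`. -/
noncomputable def hypF (r α β : ℝ) : ℝ :=
  sSup ((fun ℓ => hypG r ℓ α β) '' Set.Ici 0)

/-! ### Auxiliary definitions and lemmas -/

/-- Reduced form of the dual test function, with `x = 1/(tanh r · cos α)`,
`y = 1/(tanh r · cos β)`. -/
noncomputable def ggAux (x y ℓ : ℝ) : ℝ :=
  2/3*ℓ + 2/3*Real.sinh ℓ - (x-1)*(y-1)*(Real.sinh ℓ)^3/9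
    - (x+y)*(1-Real.exp (-ℓ))^3*(3+Real.exp (-ℓ))/(36*Real.exp (-ℓ))

/-- Value of the diagonal supremum. -/
noncomputable def mmAux (z : ℝ) : ℝ :=
  2/3*Real.log ((z+1)/(z-1)) + 4/9*(z/(z^2-1))

lemma bcertAux (z E : ℝ) (hz : 1 < z) (hE : 1 ≤ E) :
    1/3 * (E^2*(z-1)^2/(z+1)^2 - 1) + 2/3*((E - E⁻¹)/2) - (z-1)*(z-1)*((E - E⁻¹)/2)^3/9
      - (z+z)*(1 - E⁻¹)^3*(3 + E⁻¹)/(36*E⁻¹) ≤ 4/9*(z/(z^2-1)) := by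
  have hE0 : (0:ℝ) < E := lt_of_lt_of_le one_pos hE
  have hz0 : (0:ℝ) < z - 1 := by linarith
  have hz1 : (0:ℝ) < z + 1 := by linarith
  have hz2 : (0:ℝ) < z^2 - 1 := by nlinarith
  have hp : (0:ℝ) ≤ z - 1 := hz0.le
  have hq : (0:ℝ) ≤ E - 1 := by linarith
  have hM : (0:ℝ) ≤ 16 + 48*(E-1) + 48*(E-1)^2 + 16*(E-1)^3
      + (z-1)*(48 + 112*(E-1) + 72*(E-1)^2 + 16*(E-1)^3 + 4*(E-1)^4)
      + (z-1)^2*(32 + 96*(E-1) + 84*(E-1)^2 + 28*(E-1)^3 + 4*(E-1)^4)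
      + (z-1)^3*(8*(E-1) + 12*(E-1)^2 + 6*(E-1)^3 + (E-1)^4) := by
    have m1 : (0:ℝ) ≤ (E-1)^2 := sq_nonneg _
    have m2 : (0:ℝ) ≤ (E-1)^3 := pow_nonneg hq 3
    have m3 : (0:ℝ) ≤ (E-1)^4 := pow_nonneg hq 4
    have b1 : (0:ℝ) ≤ 48 + 112*(E-1) + 72*(E-1)^2 + 16*(E-1)^3 + 4*(E-1)^4 := by linarith
    have b2 : (0:ℝ) ≤ 32 + 96*(E-1) + 84*(E-1)^2 + 28*(E-1)^3 + 4*(E-1)^4 := by linarith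
    have b3 : (0:ℝ) ≤ 8*(E-1) + 12*(E-1)^2 + 6*(E-1)^3 + (E-1)^4 := by linarith
    have c1 := mul_nonneg hp b1
    have c2 := mul_nonneg (pow_nonneg hp 2) b2
    have c3 := mul_nonneg (pow_nonneg hp 3) b3
    linarith
  rw [← sub_nonneg]
  have key : 4/9*(z/(z^2-1)) - (1/3 * (E^2*(z-1)^2/(z+1)^2 - 1) + 2/3*((E - E⁻¹)/2)
        - (z-1)*(z-1)*((E - E⁻¹)/2)^3/9 - (z+z)*(1 - E⁻¹)^3*(3 + E⁻¹)/(36*E⁻¹))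
      = ((z-1)*E - (z+1))^2 *
        (16 + 48*(E-1) + 48*(E-1)^2 + 16*(E-1)^3
          + (z-1)*(48 + 112*(E-1) + 72*(E-1)^2 + 16*(E-1)^3 + 4*(E-1)^4)
          + (z-1)^2*(32 + 96*(E-1) + 84*(E-1)^2 + 28*(E-1)^3 + 4*(E-1)^4)
          + (z-1)^3*(8*(E-1) + 12*(E-1)^2 + 6*(E-1)^3 + (E-1)^4))
        / (72*E^3*(z+1)^2*(z-1)) := by
    have h1 : E ≠ 0 := hE0.ne'
    have h2 : z + 1 ≠ 0 := hz1.ne'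
    have h3 : z - 1 ≠ 0 := hz0.ne'
    have h4 : z^2 - 1 ≠ 0 := hz2.ne'
    field_simp
    ring
  rw [key]
  apply div_nonneg (mul_nonneg (sq_nonneg _) hM)
  positivity

lemma gg_le_mm (z ℓ : ℝ) (hz : 1 < z) (hℓ : 0 ≤ ℓ) : ggAux z z ℓ ≤ mmAux z := by
  have hE1 : 1 ≤ Real.exp ℓ := by rw [← Real.exp_zero]; exact Real.exp_le_exp.mpr hℓ
  have hE0 : 0 < Real.exp ℓ := Real.exp_pos ℓ
  have hz0 : (0:ℝ) < z - 1 := by linarith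
  have hz1 : (0:ℝ) < z + 1 := by linarith
  have hsinh : Real.sinh ℓ = (Real.exp ℓ - (Real.exp ℓ)⁻¹)/2 := by
    rw [Real.sinh_eq, Real.exp_neg]
  have hexpneg : Real.exp (-ℓ) = (Real.exp ℓ)⁻¹ := Real.exp_neg ℓ
  have hlog : 2/3*ℓ ≤ 2/3*Real.log ((z+1)/(z-1))
      + 1/3*((Real.exp ℓ)^2*(z-1)^2/(z+1)^2 - 1) := by
    have h1 : Real.log ((Real.exp ℓ)^2*(z-1)^2/(z+1)^2)
        ≤ (Real.exp ℓ)^2*(z-1)^2/(z+1)^2 - 1 :=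
      Real.log_le_sub_one_of_pos (by positivity)
    have h2 : Real.log ((Real.exp ℓ)^2*(z-1)^2/(z+1)^2)
        = 2*ℓ + 2*Real.log (z-1) - 2*Real.log (z+1) := by
      rw [Real.log_div (by positivity) (by positivity),
        Real.log_mul (by positivity) (by positivity)]
      simp only [Real.log_pow]
      rw [Real.log_exp]
      push_cast; ring
    have h3 : Real.log ((z+1)/(z-1)) = Real.log (z+1) - Real.log (z-1) :=
      Real.log_div hz1.ne' hz0.ne'
    rw [h3]; linarith
  have hrat := bcertAux z (Real.exp ℓ) hz hE1
  unfold ggAux mmAux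
  rw [hsinh, hexpneg]
  linarith [hrat, hlog]

lemma gg_at_max (z : ℝ) (hz : 1 < z) : ggAux z z (Real.log ((z+1)/(z-1))) = mmAux z := by
  have hz0 : (0:ℝ) < z - 1 := by linarith
  have hz1 : (0:ℝ) < z + 1 := by linarith
  have h0 : (0:ℝ) < (z+1)/(z-1) := by positivity
  have hz2 : z^2 - 1 ≠ 0 := by nlinarith
  unfold ggAux mmAux
  rw [Real.sinh_eq, Real.exp_neg, Real.exp_log h0]
  field_simp
  ring

/-- Off-diagonal `g` is dominated by the diagonal at `z = 1 + √((x-1)(y-1))`. -/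
lemma gg_offdiag (x y σ ℓ : ℝ) (hσ2 : σ^2 = (x-1)*(y-1)) (hs : 2*σ ≤ x + y - 2)
    (hℓ : 0 ≤ ℓ) : ggAux x y ℓ ≤ ggAux (1+σ) (1+σ) ℓ := by
  have hv0 : 0 < Real.exp (-ℓ) := Real.exp_pos _
  have hv1 : Real.exp (-ℓ) ≤ 1 := by
    rw [← Real.exp_zero]; exact Real.exp_le_exp.mpr (by linarith)
  have hW : 0 ≤ (1-Real.exp (-ℓ))^3*(3+Real.exp (-ℓ))/(36*Real.exp (-ℓ)) := by
    apply div_nonneg (mul_nonneg (pow_nonneg (by linarith) 3) (by linarith)) (by linarith)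
  have hkey : ggAux (1+σ) (1+σ) ℓ - ggAux x y ℓ
      = (x + y - 2 - 2*σ) * ((1-Real.exp (-ℓ))^3*(3+Real.exp (-ℓ))/(36*Real.exp (-ℓ))) := by
    unfold ggAux
    linear_combination (-(Real.sinh ℓ^3)/9) * hσ2
  nlinarith [mul_nonneg (by linarith : (0:ℝ) ≤ x + y - 2 - 2*σ) hW]

/-- Midpoint convexity of `m` along the substitution `x = 1 + e^p`. -/
lemma mm_mid (x y σ : ℝ) (hx : 1 < x) (hy : 1 < y)
    (hσ : σ = Real.sqrt ((x-1)*(y-1))) :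
    mmAux (1+σ) ≤ (mmAux x + mmAux y)/2 ∧ (x ≠ y → mmAux (1+σ) < (mmAux x + mmAux y)/2) := by
  have hp : (0:ℝ) < x - 1 := by linarith
  have hq : (0:ℝ) < y - 1 := by linarith
  have hprod : (0:ℝ) < (x-1)*(y-1) := mul_pos hp hq
  have hσ0 : 0 < σ := hσ ▸ Real.sqrt_pos.mpr hprod
  have hσ2 : σ^2 = (x-1)*(y-1) := by rw [hσ]; exact Real.sq_sqrt hprod.le
  have hs : 2*σ ≤ x + y - 2 := by
    have h1 : σ ≤ (x+y-2)/2 := by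
      rw [hσ]
      calc Real.sqrt ((x-1)*(y-1)) ≤ Real.sqrt (((x+y-2)/2)^2) :=
            Real.sqrt_le_sqrt (by nlinarith [sq_nonneg (x-y)])
        _ = (x+y-2)/2 := Real.sqrt_sq (by linarith)
    linarith
  have hdenx : (0:ℝ) < x^2 - 1 := by nlinarith
  have hdeny : (0:ℝ) < y^2 - 1 := by nlinarith
  have hdenz : (0:ℝ) < (1+σ)^2 - 1 := by nlinarith
  have hrat : 2*((1+σ)/((1+σ)^2-1)) ≤ x/(x^2-1) + y/(y^2-1) := by
    rw [← sub_nonneg]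
    have key : x/(x^2-1) + y/(y^2-1) - 2*((1+σ)/((1+σ)^2-1))
        = ((x*(y^2-1)+y*(x^2-1))*((1+σ)^2-1) - 2*(1+σ)*((x^2-1)*(y^2-1)))
          / ((x^2-1)*(y^2-1)*((1+σ)^2-1)) := by
      field_simp
    have hAB : (x*(y^2-1)+y*(x^2-1))*((1+σ)^2-1) - 2*(1+σ)*((x^2-1)*(y^2-1))
        = σ*(x+y-2-2*σ)*((σ+2)*(x+y-2)+σ^3+2*σ+4) := by
      linear_combination (2 + 2*σ + 2*σ^2 + 2*σ^3 + 2*y - y*σ^2 + 2*x - x*σ^2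
        + 2*x*y + 2*x*y*σ) * hσ2
    rw [key, hAB]
    have hpos : (0:ℝ) ≤ σ*(x+y-2-2*σ)*((σ+2)*(x+y-2)+σ^3+2*σ+4) := by
      apply mul_nonneg (mul_nonneg hσ0.le (by linarith))
      nlinarith [pow_pos hσ0 3]
    positivity
  have hlxp : (0:ℝ) < x + 1 := by linarith
  have hlyp : (0:ℝ) < y + 1 := by linarith
  have e1 : Real.log ((x+1)/(x-1)) = Real.log (x+1) - Real.log (x-1) :=
    Real.log_div hlxp.ne' hp.ne'
  have e2 : Real.log ((y+1)/(y-1)) = Real.log (y+1) - Real.log (y-1) :=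
    Real.log_div hlyp.ne' hq.ne'
  have e3 : Real.log ((1+σ+1)/(1+σ-1)) = Real.log (σ+2) - Real.log σ := by
    rw [show (1+σ+1)/(1+σ-1) = (σ+2)/σ by rw [show 1+σ+1 = σ+2 by ring, show 1+σ-1 = σ by ring],
      Real.log_div (by linarith) hσ0.ne']
  have hσlog : 2*Real.log σ = Real.log (x-1) + Real.log (y-1) := by
    have h := congrArg Real.log hσ2
    rw [Real.log_pow, Real.log_mul hp.ne' hq.ne'] at h
    push_cast at h
    linarith
  have hsq_le : (σ+2)^2 ≤ (x+1)*(y+1) := by nlinarith [hσ2, hs]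
  have hlog_le : 2*Real.log (σ+2) ≤ Real.log (x+1) + Real.log (y+1) := by
    have h1 : Real.log ((σ+2)^2) ≤ Real.log ((x+1)*(y+1)) :=
      Real.log_le_log (by positivity) hsq_le
    rw [Real.log_pow, Real.log_mul hlxp.ne' hlyp.ne'] at h1
    push_cast at h1
    linarith
  constructor
  · unfold mmAux
    rw [e1, e2, e3]
    linarith
  · intro hxy
    have hstrict : 2*σ < x + y - 2 := by
      have hxy0 : x - y ≠ 0 := sub_ne_zero.mpr hxy
      have h0 : (0:ℝ) < (x-y)^2 :=
        lt_of_le_of_ne (sq_nonneg _) (Ne.symm (pow_ne_zero 2 hxy0))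
      have h1 : σ^2 < ((x+y-2)/2)^2 := by
        rw [hσ2]; nlinarith [h0]
      have h2 : σ < (x+y-2)/2 := lt_of_pow_lt_pow_left₀ 2 (by linarith) h1
      linarith
    have hsq_lt : (σ+2)^2 < (x+1)*(y+1) := by nlinarith [hσ2, hstrict]
    have hlog_lt : 2*Real.log (σ+2) < Real.log (x+1) + Real.log (y+1) := by
      have h1 : Real.log ((σ+2)^2) < Real.log ((x+1)*(y+1)) :=
        Real.log_lt_log (by positivity) hsq_lt
      rw [Real.log_pow, Real.log_mul hlxp.ne' hlyp.ne'] at h1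
      push_cast at h1
      linarith
    unfold mmAux
    rw [e1, e2, e3]
    linarith

lemma hypG_eq_gg (r ℓ α β : ℝ) (ht : Real.tanh r ≠ 0) (ha : Real.cos α ≠ 0)
    (hb : Real.cos β ≠ 0) :
    hypG r ℓ α β = ggAux (Real.tanh r * Real.cos α)⁻¹ (Real.tanh r * Real.cos β)⁻¹ ℓ := by
  unfold hypG hypCandle hypCandleI hypCandleII ggAux
  have hE : Real.exp ℓ ≠ 0 := (Real.exp_pos ℓ).ne'
  have h1 : Real.sinh ℓ = (Real.exp ℓ - (Real.exp ℓ)⁻¹)/2 := by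
    rw [Real.sinh_eq, Real.exp_neg]
  have h2 : Real.cosh ℓ = (Real.exp ℓ + (Real.exp ℓ)⁻¹)/2 := by
    rw [Real.cosh_eq, Real.exp_neg]
  rw [h1, h2, Real.exp_neg]
  field_simp
  ring

lemma hypG_zero (r α β : ℝ) : hypG r 0 α β = 0 := by
  simp [hypG, hypCandle, hypCandleI, hypCandleII]

lemma gg_nonpos (x y ℓ : ℝ) (hx : 1 < x) (hy : 1 < y)
    (hℓ : 2*max 1 (Real.sqrt (18/((x-1)*(y-1)))) ≤ ℓ) : ggAux x y ℓ ≤ 0 := by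
  have hP : (0:ℝ) < (x-1)*(y-1) := mul_pos (by linarith) (by linarith)
  have hm1 : (1:ℝ) ≤ max 1 (Real.sqrt (18/((x-1)*(y-1)))) := le_max_left _ _
  have hℓ0 : (0:ℝ) ≤ ℓ := by linarith
  have hv0 : 0 < Real.exp (-ℓ) := Real.exp_pos _
  have hv1 : Real.exp (-ℓ) ≤ 1 := by
    rw [← Real.exp_zero]; exact Real.exp_le_exp.mpr (by linarith)
  have hW : 0 ≤ (x+y)*(1-Real.exp (-ℓ))^3*(3+Real.exp (-ℓ))/(36*Real.exp (-ℓ)) := by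
    apply div_nonneg _ (by linarith)
    apply mul_nonneg (mul_nonneg (by linarith) (pow_nonneg (by linarith) 3)) (by linarith)
  have hu2 : ℓ/2 ≤ Real.sinh ℓ := by
    rw [Real.sinh_eq]
    have := Real.add_one_le_exp ℓ
    linarith
  have hsq : Real.sqrt (18/((x-1)*(y-1))) ≤ Real.sinh ℓ := by
    have h := le_max_right (1:ℝ) (Real.sqrt (18/((x-1)*(y-1))))
    linarith
  have hu0 : 0 ≤ Real.sinh ℓ := le_trans (Real.sqrt_nonneg _) hsq
  have hu2' : 18/((x-1)*(y-1)) ≤ (Real.sinh ℓ)^2 := by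
    have := Real.sq_sqrt (by positivity : (0:ℝ) ≤ 18/((x-1)*(y-1)))
    nlinarith [hsq, Real.sqrt_nonneg (18/((x-1)*(y-1)))]
  have hcube : 2*Real.sinh ℓ ≤ (x-1)*(y-1)*(Real.sinh ℓ)^3/9 := by
    have h18 : 18 ≤ (x-1)*(y-1)*(Real.sinh ℓ)^2 := by
      rw [div_le_iff₀ hP] at hu2'
      linarith [hu2']
    nlinarith [mul_nonneg hu0 (by linarith : (0:ℝ) ≤ (x-1)*(y-1)*(Real.sinh ℓ)^2 - 18)]
  have hℓu : ℓ ≤ 2*Real.sinh ℓ := by linarith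
  unfold ggAux
  linarith

lemma hypG_continuous (r α β : ℝ) : Continuous (fun ℓ => hypG r ℓ α β) := by
  unfold hypG hypCandle hypCandleI hypCandleII
  fun_prop

/-- The supremum defining `f` is attained, and `f(α, β) ≤ (f(α, α) + f(β, β))/2` with
equality iff `α = β`. -/
theorem hypF_convexity (r : ℝ) (hr : 0 < r)
    (α β : ℝ) (hα : α ∈ Set.Ico 0 (π / 2)) (hβ : β ∈ Set.Ico 0 (π / 2)) :
    (∃ ℓ₀ : ℝ, 0 ≤ ℓ₀ ∧ IsGreatest ((fun ℓ => hypG r ℓ α β) '' Set.Ici 0) (hypG r ℓ₀ α β)) ∧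
    hypF r α β ≤ (hypF r α α + hypF r β β) / 2 ∧
      (hypF r α β = (hypF r α α + hypF r β β) / 2 ↔ α = β) := by
  obtain ⟨hα0, hα2⟩ := hα
  obtain ⟨hβ0, hβ2⟩ := hβ
  have hpi := Real.pi_pos
  have hca : 0 < Real.cos α := Real.cos_pos_of_mem_Ioo ⟨by linarith, hα2⟩
  have hcb : 0 < Real.cos β := Real.cos_pos_of_mem_Ioo ⟨by linarith, hβ2⟩
  have ht0 : 0 < Real.tanh r := by
    rw [Real.tanh_eq_sinh_div_cosh]
    exact div_pos (Real.sinh_pos_iff.mpr hr) (Real.cosh_pos r)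
  have ht1 : Real.tanh r < 1 := by
    rw [Real.tanh_eq_sinh_div_cosh, div_lt_one (Real.cosh_pos r)]
    rw [Real.sinh_eq, Real.cosh_eq]
    have := Real.exp_pos (-r)
    linarith
  set x := (Real.tanh r * Real.cos α)⁻¹ with hxdef
  set y := (Real.tanh r * Real.cos β)⁻¹ with hydef
  have hξ0 : 0 < Real.tanh r * Real.cos α := mul_pos ht0 hca
  have hη0 : 0 < Real.tanh r * Real.cos β := mul_pos ht0 hcb
  have hξ1 : Real.tanh r * Real.cos α < 1 := by
    have h1 : Real.tanh r * Real.cos α ≤ Real.tanh r * 1 :=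
      mul_le_mul_of_nonneg_left (Real.cos_le_one α) ht0.le
    linarith
  have hη1 : Real.tanh r * Real.cos β < 1 := by
    have h1 : Real.tanh r * Real.cos β ≤ Real.tanh r * 1 :=
      mul_le_mul_of_nonneg_left (Real.cos_le_one β) ht0.le
    linarith
  have hx : 1 < x := (one_lt_inv₀ hξ0).mpr hξ1
  have hy : 1 < y := (one_lt_inv₀ hη0).mpr hη1
  have hgeq : ∀ ℓ, hypG r ℓ α β = ggAux x y ℓ := fun ℓ =>
    hypG_eq_gg r ℓ α β ht0.ne' hca.ne' hcb.ne'
  have hgeqa : ∀ ℓ, hypG r ℓ α α = ggAux x x ℓ := fun ℓ =>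
    hypG_eq_gg r ℓ α α ht0.ne' hca.ne' hca.ne'
  have hgeqb : ∀ ℓ, hypG r ℓ β β = ggAux y y ℓ := fun ℓ =>
    hypG_eq_gg r ℓ β β ht0.ne' hcb.ne' hcb.ne'
  set σ := Real.sqrt ((x-1)*(y-1)) with hσdef
  have hprod : (0:ℝ) < (x-1)*(y-1) := mul_pos (by linarith) (by linarith)
  have hσ0 : 0 < σ := Real.sqrt_pos.mpr hprod
  have hσ2 : σ^2 = (x-1)*(y-1) := Real.sq_sqrt hprod.le
  have hs : 2*σ ≤ x + y - 2 := by
    have h1 : σ ≤ (x+y-2)/2 := by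
      rw [hσdef]
      calc Real.sqrt ((x-1)*(y-1)) ≤ Real.sqrt (((x+y-2)/2)^2) :=
            Real.sqrt_le_sqrt (by nlinarith [sq_nonneg (x-y)])
        _ = (x+y-2)/2 := Real.sqrt_sq (by linarith)
    linarith
  have hz : (1:ℝ) < 1 + σ := by linarith
  have hmid := mm_mid x y σ hx hy hσdef
  -- pointwise upper bound
  have hub : ∀ ℓ ∈ Set.Ici (0:ℝ), hypG r ℓ α β ≤ (mmAux x + mmAux y)/2 := by
    intro ℓ hℓ
    rw [hgeq ℓ]
    calc ggAux x y ℓ ≤ ggAux (1+σ) (1+σ) ℓ := gg_offdiag x y σ ℓ hσ2 hs hℓ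
      _ ≤ mmAux (1+σ) := gg_le_mm (1+σ) ℓ hz hℓ
      _ ≤ (mmAux x + mmAux y)/2 := hmid.1
  -- the supremum is attained
  have hgreatest : ∃ ℓ₀ : ℝ, 0 ≤ ℓ₀ ∧
      IsGreatest ((fun ℓ => hypG r ℓ α β) '' Set.Ici 0) (hypG r ℓ₀ α β) := by
    set Mb := 2*max 1 (Real.sqrt (18/((x-1)*(y-1)))) with hMbdef
    have hMb0 : (0:ℝ) ≤ Mb := by positivity
    obtain ⟨ℓ₀, hℓ₀, hmax⟩ :=
      isCompact_Icc.exists_isMaxOn (⟨0, by simp [hMb0]⟩ : (Set.Icc (0:ℝ) Mb).Nonempty)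
        ((hypG_continuous r α β).continuousOn)
    refine ⟨ℓ₀, hℓ₀.1, ⟨⟨ℓ₀, hℓ₀.1, rfl⟩, ?_⟩⟩
    rintro v ⟨ℓ, hℓ, rfl⟩
    rcases le_or_gt ℓ Mb with h | h
    · exact hmax ⟨hℓ, h⟩
    · have h0 : hypG r ℓ α β ≤ 0 := by
        rw [hgeq]; exact gg_nonpos x y ℓ hx hy (by linarith)
      have h1 : hypG r 0 α β ≤ hypG r ℓ₀ α β := hmax ⟨le_refl 0, hMb0⟩
      rw [hypG_zero] at h1
      simp only
      linarith
  -- diagonal suprema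
  have hFaa : hypF r α α = mmAux x := by
    unfold hypF
    apply IsGreatest.csSup_eq
    constructor
    · refine ⟨Real.log ((x+1)/(x-1)), ?_, ?_⟩
      · exact Real.log_nonneg ((one_le_div (by linarith)).mpr (by linarith))
      · simp only
        rw [hgeqa]
        exact gg_at_max x hx
    · rintro v ⟨ℓ, hℓ, rfl⟩
      simp only
      rw [hgeqa]
      exact gg_le_mm x ℓ hx hℓ
  have hFbb : hypF r β β = mmAux y := by
    unfold hypF
    apply IsGreatest.csSup_eq
    constructor
    · refine ⟨Real.log ((y+1)/(y-1)), ?_, ?_⟩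
      · exact Real.log_nonneg ((one_le_div (by linarith)).mpr (by linarith))
      · simp only
        rw [hgeqb]
        exact gg_at_max y hy
    · rintro v ⟨ℓ, hℓ, rfl⟩
      simp only
      rw [hgeqb]
      exact gg_le_mm y ℓ hy hℓ
  have hineq : hypF r α β ≤ (hypF r α α + hypF r β β)/2 := by
    rw [hFaa, hFbb]
    unfold hypF
    refine csSup_le ⟨_, Set.mem_image_of_mem _ Set.self_mem_Ici⟩ ?_
    rintro v ⟨ℓ, hℓ, rfl⟩
    exact hub ℓ hℓ
  refine ⟨hgreatest, hineq, ?_, ?_⟩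
  · -- equality implies α = β
    intro heq
    by_contra hne
    have hαπ : α ∈ Set.Icc (0:ℝ) π := ⟨hα0, by linarith⟩
    have hβπ : β ∈ Set.Icc (0:ℝ) π := ⟨hβ0, by linarith⟩
    have hcane : Real.cos α ≠ Real.cos β := fun h => hne (Real.injOn_cos hαπ hβπ h)
    have hxyne : x ≠ y := by
      intro h
      apply hcane
      have h2 : Real.tanh r * Real.cos α = Real.tanh r * Real.cos β := by
        rwa [hxdef, hydef, inv_inj] at h
      exact mul_left_cancel₀ ht0.ne' h2
    obtain ⟨ℓ₀, hℓ₀0, hg⟩ := hgreatest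
    have hval : hypF r α β = hypG r ℓ₀ α β := by
      unfold hypF
      exact hg.csSup_eq
    have hlt : hypG r ℓ₀ α β < (mmAux x + mmAux y)/2 := by
      rw [hgeq]
      calc ggAux x y ℓ₀ ≤ ggAux (1+σ) (1+σ) ℓ₀ := gg_offdiag x y σ ℓ₀ hσ2 hs hℓ₀0
        _ ≤ mmAux (1+σ) := gg_le_mm (1+σ) ℓ₀ hz hℓ₀0
        _ < (mmAux x + mmAux y)/2 := hmid.2 hxyne
    rw [hval, hFaa, hFbb] at heq
    linarith
  · intro h
    subst h
    ring
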